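/- arXiv:math/0209362 — 2 statements merged into one kernel-verified Lean document; each statement's English description precedes it below -/
import Mathlib

section
/- Let 𝕜 be a complete nontrivially normed field (for instance a finite extension of ℚ_p) and let E, F, G be Banach spaces over 𝕜. Let U ⊆ E and V ⊆ F be open sets, u₀ ∈ U, and let f : E × F → G be analytic on U × V. Then the map V → (E →L[𝕜] G) sending x to the Fréchet derivative at u₀ of the function u ↦ f(u, x) is analytic on V. -/
/-- If `f : E × F → G` is analytic on `U × V` (Banach spaces over a complete nontrivially
normed field `𝕜`, `U`, `V` open, `u₀ ∈ U`), then the map sending `x ∈ V` to the Fréchet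
derivative at `u₀` of `u ↦ f (u, x)` is analytic on `V`. -/
theorem analyticOnNhd_fderiv_in_first_variable
    {𝕜 : Type*} [NontriviallyNormedField 𝕜] [CompleteSpace 𝕜]
    {E F G : Type*}
    [NormedAddCommGroup E] [NormedSpace 𝕜 E] [CompleteSpace E]
    [NormedAddCommGroup F] [NormedSpace 𝕜 F] [CompleteSpace F]
    [NormedAddCommGroup G] [NormedSpace 𝕜 G] [CompleteSpace G]
    {U : Set E} {V : Set F} (hU : IsOpen U) (hV : IsOpen V)
    {u₀ : E} (hu₀ : u₀ ∈ U)
    {f : E × F → G} (hf : AnalyticOnNhd 𝕜 f (U ×ˢ V)) :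
    AnalyticOnNhd 𝕜 (fun x : F => fderiv 𝕜 (fun u : E => f (u, x)) u₀) V := by
  have hf' : AnalyticOnNhd 𝕜 (fderiv 𝕜 f) (U ×ˢ V) := hf.fderiv
  intro x hx
  have hmem : (u₀, x) ∈ U ×ˢ V := ⟨hu₀, hx⟩
  have key : ∀ᶠ y in nhds x, fderiv 𝕜 (fun u : E => f (u, y)) u₀
      = ((ContinuousLinearMap.compL 𝕜 E (E × F) G).flip (ContinuousLinearMap.inl 𝕜 E F))
        (fderiv 𝕜 f (u₀, y)) := by
    filter_upwards [hV.mem_nhds hx] with y hy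
    have hdf : DifferentiableAt 𝕜 f (u₀, y) := (hf _ ⟨hu₀, hy⟩).differentiableAt
    have hg : DifferentiableAt 𝕜 (fun u : E => (u, y)) u₀ :=
      (DifferentiableAt.prodMk differentiableAt_id (differentiableAt_const _))
    have h1 : fderiv 𝕜 (fun u : E => f (u, y)) u₀
        = (fderiv 𝕜 f (u₀, y)).comp (fderiv 𝕜 (fun u : E => (u, y)) u₀) :=
      fderiv_comp u₀ hdf hg
    have h2 : fderiv 𝕜 (fun u : E => (u, y)) u₀ = ContinuousLinearMap.inl 𝕜 E F := by
      have : HasFDerivAt (fun u : E => (u, y)) (ContinuousLinearMap.inl 𝕜 E F) u₀ :=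
        HasFDerivAt.prodMk (hasFDerivAt_id u₀) (hasFDerivAt_const y u₀)
      exact this.fderiv
    rw [h1, h2]
    rfl
  have hA : AnalyticAt 𝕜 (fun y : F =>
      ((ContinuousLinearMap.compL 𝕜 E (E × F) G).flip (ContinuousLinearMap.inl 𝕜 E F))
        (fderiv 𝕜 f (u₀, y))) x := by
    apply (ContinuousLinearMap.analyticAt _ _).comp
    exact (hf' _ hmem).comp ((analyticAt_const).prod analyticAt_id)
  exact hA.congr (Filter.EventuallyEq.symm key)
end

section
/- Let p and ℓ be distinct prime numbers, K a finite extension of ℚ_ℓ, and ρ : K^× → ℚ_p a continuous homomorphism. If ρ(π) = 0 for some uniformizer π of K (an element with 0 < |π| < 1 generating the value group |K^×|), then ρ is identically zero. -/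
open Metric Filter Topology

section Aux

variable {K : Type*} [NormedField K] [IsUltrametricDist K]

lemma aux_norm_le_one {t : ℝ} (ht1 : t ≤ 1) {a : K} (ha : ‖a - 1‖ ≤ t) : ‖a‖ ≤ 1 := by
  have h := IsUltrametricDist.norm_add_le_max (a - 1) 1
  simpa using h.trans (max_le (ha.trans ht1) norm_one.le)

lemma aux_mul_mem {t : ℝ} (ht1 : t ≤ 1) {a b : K} (ha : ‖a - 1‖ ≤ t) (hb : ‖b - 1‖ ≤ t) :
    ‖a * b - 1‖ ≤ t := by
  have h : a * b - 1 = a * (b - 1) + (a - 1) := by ring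
  rw [h]
  refine le_trans (IsUltrametricDist.norm_add_le_max _ _) (max_le ?_ ha)
  calc ‖a * (b - 1)‖ = ‖a‖ * ‖b - 1‖ := norm_mul _ _
    _ ≤ 1 * t := mul_le_mul (aux_norm_le_one ht1 ha) hb (norm_nonneg _) zero_le_one
    _ = t := one_mul t

lemma aux_pow_mem {t : ℝ} (ht0 : 0 ≤ t) (ht1 : t ≤ 1) {a : K} (ha : ‖a - 1‖ ≤ t) (n : ℕ) :
    ‖a ^ n - 1‖ ≤ t := by
  induction n with
  | zero => simpa using ht0
  | succ n ih => rw [pow_succ]; exact aux_mul_mem ht1 ih ha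

/-- Existence of `q`-th roots near `1` in a complete ultrametric field in which `q` has norm 1. -/
lemma aux_exists_root [CompleteSpace K] {q : ℕ} (hqnorm : ‖(q : K)‖ = 1)
    {y : K} {t : ℝ} (ht1 : t < 1) (hy : ‖y - 1‖ ≤ t) :
    ∃ x : K, x ^ q = y ∧ ‖x - 1‖ ≤ t := by
  have ht0 : (0:ℝ) ≤ t := le_trans (norm_nonneg _) hy
  have hq0 : (q : K) ≠ 0 := by
    intro h; rw [h, norm_zero] at hqnorm; exact zero_ne_one hqnorm
  set B : Set K := closedBall (1 : K) t with hB
  have hmem : ∀ {a : K}, a ∈ B ↔ ‖a - 1‖ ≤ t := by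
    intro a; rw [hB, mem_closedBall, dist_eq_norm]
  set g : K → K := fun x => x - (x ^ q - y) / (q : K) with hg
  have key : ∀ x z : K, ‖x - 1‖ ≤ t → ‖z - 1‖ ≤ t → ‖g x - g z‖ ≤ t * ‖x - z‖ := by
    intro x z hx hz
    have hS : (∑ i ∈ Finset.range q, x ^ i * z ^ (q - 1 - i)) * (x - z) = x ^ q - z ^ q :=
      geom_sum₂_mul x z q
    set S := ∑ i ∈ Finset.range q, x ^ i * z ^ (q - 1 - i) with hSdef
    have hid : g x - g z = (x - z) * (((q : K) - S) / (q : K)) := by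
      have e : g x - g z = (x - z) - (x ^ q - z ^ q) / (q : K) := by rw [hg]; ring
      rw [e, ← hS]
      field_simp
    have hqS : ‖(q : K) - S‖ ≤ t := by
      have hq_eq : (q : K) = ∑ _i ∈ Finset.range q, (1 : K) := by simp
      rw [hq_eq, hSdef, ← Finset.sum_sub_distrib]
      refine IsUltrametricDist.norm_sum_le_of_forall_le_of_nonneg ht0 ?_
      intro i _
      rw [norm_sub_rev]
      exact aux_mul_mem ht1.le (aux_pow_mem ht0 ht1.le hx i) (aux_pow_mem ht0 ht1.le hz _)
    calc ‖g x - g z‖ = ‖x - z‖ * (‖(q : K) - S‖ / ‖(q : K)‖) := by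
          rw [hid, norm_mul, norm_div]
      _ = ‖x - z‖ * ‖(q : K) - S‖ := by rw [hqnorm, div_one]
      _ ≤ ‖x - z‖ * t := mul_le_mul_of_nonneg_left hqS (norm_nonneg _)
      _ = t * ‖x - z‖ := mul_comm _ _
  have hmaps : ∀ x : K, ‖x - 1‖ ≤ t → ‖g x - 1‖ ≤ t := by
    intro x hx
    have h1 : ‖g (1 : K) - 1‖ ≤ t := by
      have e : g (1 : K) - 1 = (y - 1) / (q : K) := by rw [hg]; simp; ring
      rw [e, norm_div, hqnorm, div_one]; exact hy
    have h2 : ‖g x - g 1‖ ≤ t * ‖x - 1‖ := key x 1 hx (by simpa using ht0)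
    have e : g x - 1 = (g x - g 1) + (g 1 - 1) := by ring
    rw [e]
    refine le_trans (IsUltrametricDist.norm_add_le_max _ _) (max_le (le_trans h2 ?_) h1)
    nlinarith [norm_nonneg (x - 1)]
  haveI : Nonempty B := ⟨⟨1, hmem.mpr (by simpa using ht0)⟩⟩
  haveI : CompleteSpace B := (Metric.isClosed_closedBall : IsClosed B).completeSpace_coe
  set f : B → B := fun x => ⟨g x.1, hmem.mpr (hmaps x.1 (hmem.mp x.2))⟩ with hf
  have hcontr : ContractingWith ⟨t, ht0⟩ f := by
    constructor
    · exact_mod_cast ht1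
    · refine LipschitzWith.of_dist_le_mul fun a b => ?_
      rw [Subtype.dist_eq, dist_eq_norm, Subtype.dist_eq, dist_eq_norm]
      exact key a.1 b.1 (hmem.mp a.2) (hmem.mp b.2)
  have hfix := hcontr.fixedPoint_isFixedPt
  set x := ContractingWith.fixedPoint f hcontr with hxdef
  have hgx : g x.1 = x.1 := congrArg Subtype.val hfix
  refine ⟨x.1, ?_, hmem.mp x.2⟩
  have hdiv : (x.1 ^ q - y) / (q : K) = 0 := by
    have := hgx; rw [hg] at this
    simpa [sub_eq_self] using this
  have := (div_eq_zero_iff.mp hdiv).resolve_right hq0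
  exact sub_eq_zero.mp this

/-- Iterated roots: `q^n`-th roots near `1`. -/
lemma aux_exists_root_pow [CompleteSpace K] {q : ℕ} (hqnorm : ‖(q : K)‖ = 1)
    {y : K} {t : ℝ} (ht1 : t < 1) (hy : ‖y - 1‖ ≤ t) (n : ℕ) :
    ∃ x : K, x ^ (q ^ n) = y ∧ ‖x - 1‖ ≤ t := by
  induction n with
  | zero => exact ⟨y, by simpa using hy, hy⟩
  | succ n ih =>
    obtain ⟨x, hxq, hxt⟩ := ih
    obtain ⟨w, hwq, hwt⟩ := aux_exists_root hqnorm ht1 hxt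
    refine ⟨w, ?_, hwt⟩
    rw [pow_succ', pow_mul, hwq, hxq]

end Aux

set_option maxHeartbeats 1000000 in
/-- For distinct primes `p ≠ ℓ` and `K` a finite extension of `ℚ_ℓ`, a continuous
homomorphism `ρ : Kˣ → ℚ_p` vanishing on some uniformizer `π` (an element with
`0 < ‖π‖ < 1` generating the value group) is identically zero. -/
theorem continuous_hom_eq_zero_of_vanishes_on_uniformizer
    {p ℓ : ℕ} [Fact p.Prime] [Fact ℓ.Prime] (hpl : p ≠ ℓ)
    (K : Type*) [NormedField K] [Algebra ℚ_[ℓ] K] [FiniteDimensional ℚ_[ℓ] K]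
    (hK : ∀ a : ℚ_[ℓ], ‖algebraMap ℚ_[ℓ] K a‖ = ‖a‖)
    (ρ : Kˣ → ℚ_[p]) (hρ_cont : Continuous ρ)
    (hρ_add : ∀ x y : Kˣ, ρ (x * y) = ρ x + ρ y)
    (π : Kˣ) (hπ_pos : 0 < ‖(π : K)‖) (hπ_lt : ‖(π : K)‖ < 1)
    (hπ_gen : ∀ x : Kˣ, ∃ n : ℤ, ‖(x : K)‖ = ‖(π : K)‖ ^ n)
    (hρπ : ρ π = 0) :
    ∀ x : Kˣ, ρ x = 0 := by
  -- basic instances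
  letI : NormedSpace ℚ_[ℓ] K :=
    ⟨fun a x => le_of_eq (by rw [Algebra.smul_def, norm_mul, hK])⟩
  haveI : IsUltrametricDist K := by
    refine IsUltrametricDist.isUltrametricDist_of_forall_norm_natCast_le_one fun n => ?_
    rw [show ((n : ℕ) : K) = algebraMap ℚ_[ℓ] K ((n : ℕ) : ℚ_[ℓ]) from (map_natCast _ n).symm,
      hK]
    rw [show ((n : ℕ) : ℚ_[ℓ]) = ((n : ℤ) : ℚ_[ℓ]) by push_cast; ring]
    exact Padic.norm_int_le_one _
  haveI : CompleteSpace K := FiniteDimensional.complete ℚ_[ℓ] K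
  haveI : ProperSpace K := FiniteDimensional.proper ℚ_[ℓ] K
  -- algebraic facts about ρ
  have hρ1 : ρ 1 = 0 := by
    have h := hρ_add 1 1
    rw [mul_one] at h
    have : ρ 1 + ρ 1 = ρ 1 + 0 := by rw [add_zero, ← h]
    exact (add_left_cancel this)
  have hρpow : ∀ (v : Kˣ) (n : ℕ), ρ (v ^ n) = n * ρ v := by
    intro v n
    induction n with
    | zero => simpa using hρ1
    | succ n ih => rw [pow_succ, hρ_add, ih]; push_cast; ring
  have hρinv : ∀ v : Kˣ, ρ v⁻¹ = -ρ v := by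
    intro v
    have h := hρ_add v v⁻¹
    rw [mul_inv_cancel] at h
    rw [hρ1] at h
    linear_combination -h
  have hρzpow : ∀ (v : Kˣ) (n : ℤ), ρ (v ^ n) = n * ρ v := by
    intro v n
    cases n with
    | ofNat n => simpa using hρpow v n
    | negSucc n =>
      rw [zpow_negSucc, hρinv, hρpow]
      push_cast; ring
  -- norm of p in K is 1
  have hpK : ‖((p : ℕ) : K)‖ = 1 := by
    rw [show ((p : ℕ) : K) = algebraMap ℚ_[ℓ] K ((p : ℕ) : ℚ_[ℓ]) from (map_natCast _ p).symm,
      hK]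
    have hle : ‖((p : ℕ) : ℚ_[ℓ])‖ ≤ 1 := by
      rw [show ((p : ℕ) : ℚ_[ℓ]) = ((p : ℤ) : ℚ_[ℓ]) by push_cast; ring]
      exact Padic.norm_int_le_one _
    rcases lt_or_eq_of_le hle with hlt | heq
    · exfalso
      have : (ℓ : ℤ) ∣ (p : ℤ) := by
        rw [← Padic.norm_intCast_lt_one_iff]
        simpa using hlt
      have : ℓ ∣ p := Int.ofNat_dvd.mp this
      exact hpl (((Nat.prime_dvd_prime_iff_eq (Fact.out) (Fact.out)).mp this).symm)
    · exact heq
  -- core: ρ vanishes on norm-one units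
  have core : ∀ u : Kˣ, ‖(u : K)‖ = 1 → ρ u = 0 := by
    intro u hu
    -- continuity at 1, in ε-δ form along the valuation embedding
    have hcont : ∀ ε > (0:ℝ), ∃ δ > (0:ℝ), ∀ v : Kˣ, ‖(v : K) - 1‖ < δ → ‖ρ v‖ < ε := by
      intro ε hε
      have h1 : ContinuousAt ρ 1 := hρ_cont.continuousAt
      rw [ContinuousAt, hρ1] at h1
      have hnhds : 𝓝 (1 : Kˣ) = Filter.comap (Units.val : Kˣ → K) (𝓝 (1 : K)) := by
        have := (Units.isEmbedding_val₀ (G₀ := K)).toIsInducing.nhds_eq_comap (1 : Kˣ)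
        simpa using this
      rw [hnhds] at h1
      have hball : ρ ⁻¹' (ball (0 : ℚ_[p]) ε) ∈
          Filter.comap (Units.val : Kˣ → K) (𝓝 (1 : K)) :=
        h1 (ball_mem_nhds _ hε)
      obtain ⟨S, hS, hsub⟩ := Filter.mem_comap.mp hball
      obtain ⟨δ, hδ, hδS⟩ := Metric.mem_nhds_iff.mp hS
      refine ⟨δ, hδ, fun v hv => ?_⟩
      have : (v : K) ∈ ball (1 : K) δ := by rwa [mem_ball, dist_eq_norm]
      have := hsub (Set.mem_preimage.mpr (hδS this))
      simpa [mem_ball, dist_eq_norm] using this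
    -- compactness: some positive power of u is close to 1
    have hnear : ∀ δ > (0:ℝ), ∃ m : ℕ, 0 < m ∧ ‖((u : K)) ^ m - 1‖ < δ := by
      intro δ hδ
      have hmem : ∀ n : ℕ, (u : K) ^ n ∈ sphere (0 : K) 1 := by
        intro n
        rw [mem_sphere_zero_iff_norm, norm_pow, hu, one_pow]
      obtain ⟨z, _, φ, hφ, hz⟩ :=
        (isCompact_sphere (0 : K) 1).tendsto_subseq hmem
      rw [Metric.tendsto_atTop] at hz
      obtain ⟨N, hN⟩ := hz (δ / 2) (by linarith)
      have h1 := hN N le_rfl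
      have h2 := hN (N + 1) (by omega)
      have hlt : φ N < φ (N + 1) := hφ (by omega)
      refine ⟨φ (N + 1) - φ N, by omega, ?_⟩
      have hdist : ‖(u : K) ^ (φ (N + 1)) - (u : K) ^ (φ N)‖ < δ := by
        have := dist_triangle ((u : K) ^ (φ (N + 1))) z ((u : K) ^ (φ N))
        rw [dist_eq_norm] at this
        have e1 : dist ((u : K) ^ (φ (N+1))) z < δ / 2 := h2
        have e2 : dist z ((u : K) ^ (φ N)) < δ / 2 := by rw [dist_comm]; exact h1
        linarith
      have hfactor : (u : K) ^ (φ (N + 1)) - (u : K) ^ (φ N)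
          = (u : K) ^ (φ N) * ((u : K) ^ (φ (N + 1) - φ N) - 1) := by
        rw [mul_sub, mul_one, ← pow_add, Nat.add_sub_cancel' hlt.le]
      rw [hfactor, norm_mul, norm_pow, hu, one_pow, one_mul] at hdist
      exact hdist
    -- conclude : ‖ρ u‖ is arbitrarily small
    obtain ⟨δ, hδ, hδρ⟩ := hcont 1 one_pos
    obtain ⟨m, hm, hmu⟩ := hnear (min δ 1) (lt_min hδ one_pos)
    set t : ℝ := ‖(u : K) ^ m - 1‖ with htdef
    have ht1 : t < 1 := lt_of_lt_of_le hmu (min_le_right _ _)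
    have htδ : t < δ := lt_of_lt_of_le hmu (min_le_left _ _)
    have hcm : ‖((m : ℕ) : ℚ_[p])‖ > 0 := by
      have hne : ((m : ℕ) : ℚ_[p]) ≠ 0 := by exact_mod_cast hm.ne'
      exact norm_pos_iff.mpr hne
    have key : ∀ n : ℕ, ‖ρ u‖ ≤ (‖((m : ℕ) : ℚ_[p])‖)⁻¹ * ((p : ℝ)⁻¹) ^ n := by
      intro n
      obtain ⟨x, hxq, hxt⟩ := aux_exists_root_pow (q := p) hpK ht1 le_rfl n
      have hx1 : ‖x - 1‖ < 1 := lt_of_le_of_lt hxt ht1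
      have hxne : x ≠ 0 := by
        intro h
        rw [h] at hx1
        simp at hx1
      set w : Kˣ := Units.mk0 x hxne with hwdef
      have hwpow : w ^ (p ^ n) = u ^ m := by
        ext
        rw [Units.val_pow_eq_pow_val, Units.val_pow_eq_pow_val]
        simpa [hwdef] using hxq
      have hρw : ‖ρ w‖ < 1 := hδρ w (by simpa [hwdef] using lt_of_le_of_lt hxt htδ)
      have heq : ((p : ℚ_[p]) ^ n) * ρ w = ((m : ℕ) : ℚ_[p]) * ρ u := by
        have h1 : ρ (w ^ (p ^ n)) = ((p ^ n : ℕ) : ℚ_[p]) * ρ w := hρpow w (p ^ n)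
        have h2 : ρ (u ^ m) = ((m : ℕ) : ℚ_[p]) * ρ u := hρpow u m
        rw [hwpow, h2] at h1
        rw [h1]
        push_cast
        ring
      have hnorm : ‖((m : ℕ) : ℚ_[p])‖ * ‖ρ u‖ ≤ ((p : ℝ)⁻¹) ^ n := by
        calc ‖((m : ℕ) : ℚ_[p])‖ * ‖ρ u‖ = ‖((m : ℕ) : ℚ_[p]) * ρ u‖ := (norm_mul _ _).symm
          _ = ‖((p : ℚ_[p]) ^ n) * ρ w‖ := by rw [heq]
          _ = ‖(p : ℚ_[p])‖ ^ n * ‖ρ w‖ := by rw [norm_mul, norm_pow]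
          _ ≤ ‖(p : ℚ_[p])‖ ^ n * 1 := by
              exact mul_le_mul_of_nonneg_left hρw.le (by positivity)
          _ = ((p : ℝ)⁻¹) ^ n := by rw [mul_one, Padic.norm_p]
      rw [inv_mul_eq_div, le_div_iff₀ hcm]
      calc ‖ρ u‖ * ‖((m : ℕ) : ℚ_[p])‖ = ‖((m : ℕ) : ℚ_[p])‖ * ‖ρ u‖ := mul_comm _ _
        _ ≤ ((p : ℝ)⁻¹) ^ n := hnorm
    have hlim : Filter.Tendsto
        (fun n : ℕ => (‖((m : ℕ) : ℚ_[p])‖)⁻¹ * ((p : ℝ)⁻¹) ^ n) atTop (𝓝 0) := by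
      have hp1 : (p : ℝ)⁻¹ < 1 := by
        rw [inv_lt_one_iff₀]
        right
        exact_mod_cast (Fact.out : p.Prime).one_lt
      have h0 : (0:ℝ) ≤ (p : ℝ)⁻¹ := by positivity
      have := tendsto_pow_atTop_nhds_zero_of_lt_one h0 hp1
      simpa using this.const_mul (‖((m : ℕ) : ℚ_[p])‖)⁻¹
    have : ‖ρ u‖ ≤ 0 := ge_of_tendsto' hlim key
    simpa using le_antisymm this (norm_nonneg _)
  -- reduce the general case to norm-one units
  intro x
  obtain ⟨n, hn⟩ := hπ_gen x
  set u : Kˣ := x * (π ^ n)⁻¹ with hudef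
  have hun : ‖(u : K)‖ = 1 := by
    have hval : ((u : Kˣ) : K) = (x : K) * (((π ^ n : Kˣ) : K))⁻¹ := by
      rw [hudef, Units.val_mul, Units.val_inv_eq_inv_val]
    have hπn : ‖((π ^ n : Kˣ) : K)‖ = ‖(π : K)‖ ^ n := by
      rw [Units.val_zpow_eq_zpow_val, norm_zpow]
    rw [hval, norm_mul, norm_inv, hπn, hn]
    exact mul_inv_cancel₀ (zpow_ne_zero n hπ_pos.ne')
  have hx : x = u * π ^ n := by rw [hudef]; group
  rw [hx, hρ_add, core u hun, hρzpow, hρπ]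
  ring
end
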